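/- Let n ≥ 2 be an integer. For 1 ≤ j ≤ n set q_j = (n + 1 − 2j)/(2n) ∈ ℚ. Let σ be a permutation of {1, …, n} and let k₁, …, k_n be integers. Define x_i = q_{σ(i)} + k_i for 1 ≤ i ≤ n. If x_i ≥ x_{i+1} for all 1 ≤ i ≤ n − 1 and x_{i₀} − x_{i₀+1} ≥ 2/n for some index i₀, then x₁ − x_n ≥ 1. -/

import Mathlib

/-- Type A case (2) gap estimate: if an element of the affine Weyl orbit of the Iwahori
barycenter `q_j = (n + 1 - 2j)/(2n)` is nonincreasing and has some consecutive gap of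
size at least `2/n`, then the difference of its first and last coordinates is at
least `1`. -/
theorem affine_weyl_orbit_barycenter_gap
    (n : ℕ) (hn : 2 ≤ n) (σ : Equiv.Perm (Fin n)) (k : Fin n → ℤ)
    (q : Fin n → ℚ)
    (hq : ∀ j : Fin n, q j = ((n : ℚ) - 1 - 2 * ((j : ℕ) : ℚ)) / (2 * n))
    (x : Fin n → ℚ) (hx : ∀ i : Fin n, x i = q (σ i) + (k i : ℚ))
    (hmono : ∀ (i : ℕ) (h : i + 1 < n), x ⟨i + 1, h⟩ ≤ x ⟨i, by omega⟩)
    (i₀ : ℕ) (h₀ : i₀ + 1 < n)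
    (hgap : 2 / (n : ℚ) ≤ x ⟨i₀, by omega⟩ - x ⟨i₀ + 1, h₀⟩) :
    1 ≤ x ⟨0, by omega⟩ - x ⟨n - 1, by omega⟩ := by
  have hn0 : (0:ℚ) < n := by positivity
  -- key: each consecutive difference is at least 1/n
  have key : ∀ (i : ℕ) (h : i + 1 < n),
      1 / (n:ℚ) ≤ x ⟨i, by omega⟩ - x ⟨i + 1, h⟩ := by
    intro i h
    have hne : (n:ℚ) ≠ 0 := ne_of_gt hn0
    have hx' : x ⟨i, by omega⟩ - x ⟨i + 1, h⟩ =
        ((((σ ⟨i + 1, h⟩ : ℕ) : ℤ) - ((σ ⟨i, by omega⟩ : ℕ) : ℤ)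
          + n * (k ⟨i, by omega⟩ - k ⟨i + 1, h⟩) : ℤ) : ℚ) / n := by
      rw [hx, hx, hq, hq]
      push_cast
      field_simp
      ring
    obtain ⟨m, hmdef⟩ : ∃ m : ℤ, m = ((σ ⟨i + 1, h⟩ : ℕ) : ℤ)
        - ((σ ⟨i, by omega⟩ : ℕ) : ℤ)
        + n * (k ⟨i, by omega⟩ - k ⟨i + 1, h⟩) := ⟨_, rfl⟩
    rw [← hmdef] at hx'
    have hab : ((σ ⟨i + 1, h⟩ : ℕ) : ℤ) ≠ ((σ ⟨i, by omega⟩ : ℕ) : ℤ) := by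
      intro hc
      have h1 : σ ⟨i + 1, h⟩ = σ ⟨i, by omega⟩ := Fin.ext (by exact_mod_cast hc)
      have h2 := σ.injective h1
      simp [Fin.ext_iff] at h2
    have hm0 : 0 ≤ m := by
      have hmm := hmono i h
      rw [← sub_nonneg, hx'] at hmm
      by_contra hc
      push_neg at hc
      have : (m : ℚ) / n < 0 :=
        div_neg_of_neg_of_pos (by exact_mod_cast hc) hn0
      linarith
    have hmne : m ≠ 0 := by
      intro hc
      have hd0 : ((σ ⟨i + 1, h⟩ : ℕ) : ℤ) - ((σ ⟨i, by omega⟩ : ℕ) : ℤ)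
          = -(n * (k ⟨i, by omega⟩ - k ⟨i + 1, h⟩)) := by omega
      have hdvd : (n : ℤ) ∣ (((σ ⟨i + 1, h⟩ : ℕ) : ℤ) - ((σ ⟨i, by omega⟩ : ℕ) : ℤ)) :=
        ⟨-(k ⟨i, by omega⟩ - k ⟨i + 1, h⟩), by rw [hd0]; ring⟩
      have hlt : |((σ ⟨i + 1, h⟩ : ℕ) : ℤ) - ((σ ⟨i, by omega⟩ : ℕ) : ℤ)| < (n : ℤ) := by
        have hb := (σ ⟨i + 1, h⟩).isLt
        have ha := (σ ⟨i, show i < n by omega⟩).isLt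
        rw [abs_lt]
        constructor <;> omega
      have h3 := Int.eq_zero_of_abs_lt_dvd hdvd hlt
      exact hab (by omega) |>.elim
    have hm1 : 1 ≤ m := by omega
    rw [hx']
    gcongr
    exact_mod_cast hm1
  -- telescoping
  have tel : x ⟨0, by omega⟩ - x ⟨n - 1, by omega⟩
      = ∑ i ∈ Finset.range (n - 1),
          ((fun j => if hj : j < n then x ⟨j, hj⟩ else 0) i
            - (fun j => if hj : j < n then x ⟨j, hj⟩ else 0) (i + 1)) := by
    rw [Finset.sum_range_sub' (fun j => if hj : j < n then x ⟨j, hj⟩ else 0)]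
    have h0 : 0 < n := by omega
    have h1 : n - 1 < n := by omega
    simp only [h0, h1, dif_pos]
  rw [tel]
  have hbound : ∀ i ∈ Finset.range (n - 1),
      (1 / (n:ℚ) + if i = i₀ then 1 / (n:ℚ) else 0)
        ≤ (fun j => if hj : j < n then x ⟨j, hj⟩ else 0) i
            - (fun j => if hj : j < n then x ⟨j, hj⟩ else 0) (i + 1) := by
    intro i hi
    simp only [Finset.mem_range] at hi
    have h : i + 1 < n := by omega
    have h' : i < n := by omega
    simp only [h, h', dif_pos]
    by_cases hc : i = i₀
    · rw [if_pos hc]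
      have h2 : 1 / (n:ℚ) + 1 / n = 2 / n := by ring
      rw [h2]
      subst hc
      exact hgap
    · simpa [hc] using key i h
  have hsum : (1:ℚ) = ∑ i ∈ Finset.range (n - 1),
      (1 / (n:ℚ) + if i = i₀ then 1 / (n:ℚ) else 0) := by
    rw [Finset.sum_add_distrib, Finset.sum_const, Finset.sum_ite_eq'
      (Finset.range (n - 1)) i₀ (fun _ => 1 / (n:ℚ))]
    have hmem : i₀ ∈ Finset.range (n - 1) := Finset.mem_range.mpr (by omega)
    have hne : (n:ℚ) ≠ 0 := ne_of_gt hn0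
    have hcast : ((n - 1 : ℕ) : ℚ) = (n : ℚ) - 1 := by
      push_cast [Nat.cast_sub (by omega : 1 ≤ n)]
      ring
    rw [if_pos hmem, Finset.card_range, nsmul_eq_mul, hcast]
    field_simp
    ring
  rw [hsum]
  exact Finset.sum_le_sum hbound
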